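/- Let A, B, C, O be points of the Euclidean plane (EuclideanSpace ℝ (Fin 2)) with O distinct from A, B and C, and suppose the (unsigned) angles at O satisfy ∠AOB = ∠BOC = ∠COA = 2π/3. Then O minimizes the total distance to the three vertices: for every point P of the plane, dist(O,A) + dist(O,B) + dist(O,C) ≤ dist(P,A) + dist(P,B) + dist(P,C). -/

import Mathlib

open EuclideanGeometry Real

/-- If `O` is a Fermat point of the triangle `ABC` in the Euclidean plane (all three
unsigned angles at `O` equal `2π/3`), then `O` minimizes the total distance to the
three vertices. -/
theorem stmt_6 (A B C O : EuclideanSpace ℝ (Fin 2))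
    (hA : O ≠ A) (hB : O ≠ B) (hC : O ≠ C)
    (h₁ : ∠ A O B = 2 * π / 3) (h₂ : ∠ B O C = 2 * π / 3) (h₃ : ∠ C O A = 2 * π / 3) :
    ∀ P : EuclideanSpace ℝ (Fin 2),
      dist O A + dist O B + dist O C ≤ dist P A + dist P B + dist P C := by
  intro P
  set a : EuclideanSpace ℝ (Fin 2) := A - O with ha
  set b : EuclideanSpace ℝ (Fin 2) := B - O with hb
  set c : EuclideanSpace ℝ (Fin 2) := C - O with hc
  have hcos : Real.cos (2 * π / 3) = -(1/2) := by
    have : (2 : ℝ) * π / 3 = π - π / 3 := by ring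
    rw [this, Real.cos_pi_sub, Real.cos_pi_div_three]
  have hna : ‖a‖ ≠ 0 := by
    simp only [ha, norm_ne_zero_iff, sub_ne_zero]
    exact fun h => hA h.symm
  have hnb : ‖b‖ ≠ 0 := by
    simp only [hb, norm_ne_zero_iff, sub_ne_zero]
    exact fun h => hB h.symm
  have hnc : ‖c‖ ≠ 0 := by
    simp only [hc, norm_ne_zero_iff, sub_ne_zero]
    exact fun h => hC h.symm
  have hang : ∀ X Y : EuclideanSpace ℝ (Fin 2), ∠ X O Y = InnerProductGeometry.angle (X - O) (Y - O) := by
    intro X Y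
    rfl
  have hab : inner ℝ a b = -(1/2) * (‖a‖ * ‖b‖) := by
    have := InnerProductGeometry.cos_angle_mul_norm_mul_norm a b
    rw [← hang, h₁, hcos] at this
    linarith
  have hbc : inner ℝ b c = -(1/2) * (‖b‖ * ‖c‖) := by
    have := InnerProductGeometry.cos_angle_mul_norm_mul_norm b c
    rw [← hang, h₂, hcos] at this
    linarith
  have hca : inner ℝ c a = -(1/2) * (‖c‖ * ‖a‖) := by
    have := InnerProductGeometry.cos_angle_mul_norm_mul_norm c a
    rw [← hang, h₃, hcos] at this
    linarith
  set u : EuclideanSpace ℝ (Fin 2) := ‖a‖⁻¹ • a with hu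
  set v : EuclideanSpace ℝ (Fin 2) := ‖b‖⁻¹ • b with hv
  set w : EuclideanSpace ℝ (Fin 2) := ‖c‖⁻¹ • c with hw
  have hnu : ‖u‖ = 1 := by
    rw [hu, norm_smul, norm_inv, norm_norm, inv_mul_cancel₀ hna]
  have hnv : ‖v‖ = 1 := by
    rw [hv, norm_smul, norm_inv, norm_norm, inv_mul_cancel₀ hnb]
  have hnw : ‖w‖ = 1 := by
    rw [hw, norm_smul, norm_inv, norm_norm, inv_mul_cancel₀ hnc]
  have huv : (inner ℝ u v : ℝ) = -(1/2) := by
    rw [hu, hv, real_inner_smul_left, real_inner_smul_right, hab]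
    field_simp
  have hvw : (inner ℝ v w : ℝ) = -(1/2) := by
    rw [hv, hw, real_inner_smul_left, real_inner_smul_right, hbc]
    field_simp
  have hwu : (inner ℝ w u : ℝ) = -(1/2) := by
    rw [hw, hu, real_inner_smul_left, real_inner_smul_right, hca]
    field_simp
  have hsum : u + v + w = 0 := by
    have hsq : ‖u + v + w‖ ^ 2 = 0 := by
      rw [← real_inner_self_eq_norm_sq]
      simp only [inner_add_add_self, inner_add_left, inner_add_right]
      have c1 : (inner ℝ v u : ℝ) = -(1/2) := by rw [real_inner_comm]; exact huv
      have c2 : (inner ℝ w v : ℝ) = -(1/2) := by rw [real_inner_comm]; exact hvw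
      have c3 : (inner ℝ u w : ℝ) = -(1/2) := by rw [real_inner_comm]; exact hwu
      rw [real_inner_self_eq_norm_sq, real_inner_self_eq_norm_sq, real_inner_self_eq_norm_sq,
        hnu, hnv, hnw, huv, hvw, hwu, c1, c2, c3]
      ring
    have := pow_eq_zero_iff (n := 2) (by norm_num) |>.mp hsq
    exact norm_eq_zero.mp this
  -- Cauchy-Schwarz bounds
  have key : ∀ (X : EuclideanSpace ℝ (Fin 2)) (z : EuclideanSpace ℝ (Fin 2)), ‖z‖ = 1 →
      (inner ℝ (X - P) z : ℝ) ≤ dist P X := by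
    intro X z hz
    calc (inner ℝ (X - P) z : ℝ) ≤ ‖X - P‖ * ‖z‖ := real_inner_le_norm _ _
      _ = dist P X := by rw [hz, mul_one, dist_comm, dist_eq_norm]
  have ku := key A u hnu
  have kv := key B v hnv
  have kw := key C w hnw
  -- rewrite inner ℝ (X - P) z = inner ℝ (X - O) z + inner ℝ (O - P) z
  have split : ∀ (X z : EuclideanSpace ℝ (Fin 2)),
      (inner ℝ (X - P) z : ℝ) = inner ℝ (X - O) z + (inner ℝ (O - P) z : ℝ) := by
    intro X z
    rw [← inner_add_left]
    congr 1
    abel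
  have iau : (inner ℝ a u : ℝ) = ‖a‖ := by
    rw [hu, real_inner_smul_right, real_inner_self_eq_norm_sq]
    field_simp
  have ibv : (inner ℝ b v : ℝ) = ‖b‖ := by
    rw [hv, real_inner_smul_right, real_inner_self_eq_norm_sq]
    field_simp
  have icw : (inner ℝ c w : ℝ) = ‖c‖ := by
    rw [hw, real_inner_smul_right, real_inner_self_eq_norm_sq]
    field_simp
  have hzero : (inner ℝ (O - P) u : ℝ) + inner ℝ (O - P) v + (inner ℝ (O - P) w : ℝ) = 0 := by
    rw [← inner_add_right, ← inner_add_right, hsum, inner_zero_right]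
  rw [split A u, ← ha, iau] at ku
  rw [split B v, ← hb, ibv] at kv
  rw [split C w, ← hc, icw] at kw
  have dOA : dist O A = ‖a‖ := by rw [dist_comm, dist_eq_norm, ha]
  have dOB : dist O B = ‖b‖ := by rw [dist_comm, dist_eq_norm, hb]
  have dOC : dist O C = ‖c‖ := by rw [dist_comm, dist_eq_norm, hc]
  rw [dOA, dOB, dOC]
  linarith
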